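/- Let f₁, f₂ be linearly independent analytic solutions of f'' + A f = 0 in 𝔻, where A is analytic in 𝔻, and define u(z) = log( (|f₁(z)|² + |f₂(z)|²) / |W(f₁,f₂)| ). Then: (i) Δu = 4 e^{-2u} in 𝔻; (ii) Δu + |∇u|² = e^{-u} Δ(e^u) in 𝔻; (iii) A = -∂²u - (∂u)² in 𝔻, where ∂ = (1/2)(∂/∂x - i ∂/∂y). -/

import Mathlib

open Complex MeasureTheory Metric Set
open scoped BigOperators

noncomputable section

/-- The open unit disc in ℂ. -/
def oDisc : Set ℂ := {z : ℂ | ‖z‖ < 1}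

/-- `f` is an analytic solution of `f'' + A f = 0` on the unit disc. -/
def IsSolution (A f : ℂ → ℂ) : Prop :=
  DifferentiableOn ℂ f oDisc ∧ ∀ z ∈ oDisc, deriv (deriv f) z + A z * f z = 0

/-- `f₁, f₂` are linearly independent as functions on the unit disc. -/
def LinIndep (f₁ f₂ : ℂ → ℂ) : Prop :=
  ∀ a b : ℂ, (∀ z ∈ oDisc, a * f₁ z + b * f₂ z = 0) → a = 0 ∧ b = 0

/-- The (pointwise) Wronskian `W(f₁,f₂) = f₁ f₂' - f₁' f₂`. -/
def Wr (f₁ f₂ : ℂ → ℂ) (z : ℂ) : ℂ := f₁ z * deriv f₂ z - deriv f₁ z * f₂ z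

/-- `w(z) dm(z)` (on the unit disc) is a Carleson measure. -/
def IsCarleson (w : ℂ → ℝ) : Prop :=
  ∃ C : ℝ, ∀ a ∈ oDisc,
    (∫⁻ z in oDisc,
      ENNReal.ofReal (w z * ((1 - ‖a‖ ^ 2) / ‖1 - (starRingEnd ℂ) a * z‖ ^ 2)))
      ≤ ENNReal.ofReal C

/-- A sequence in the unit disc is uniformly separated. -/
def UniformlySeparated (z : ℕ → ℂ) : Prop :=
  ∃ δ : ℝ, 0 < δ ∧ ∀ n : ℕ, ∀ F : Finset ℕ, n ∉ F →
    δ ≤ ∏ k ∈ F, ‖(z k - z n) / (1 - (starRingEnd ℂ) (z k) * z n)‖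

/-- Harmonic on the unit disc (equivalently, real part of an analytic function). -/
def HarmonicOnDisc (h : ℂ → ℝ) : Prop :=
  ∃ g : ℂ → ℂ, DifferentiableOn ℂ g oDisc ∧ ∀ z ∈ oDisc, h z = (g z).re

/-- Positive harmonic function on the unit disc. -/
def PosHarmonic (h : ℂ → ℝ) : Prop :=
  HarmonicOnDisc h ∧ ∀ z ∈ oDisc, 0 < h z

/-- Pseudo-hyperbolic disc of radius δ centred at a. -/
def pDisc (a : ℂ) (δ : ℝ) : Set ℂ :=
  {w ∈ oDisc | ‖(w - a) / (1 - (starRingEnd ℂ) a * w)‖ < δ}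

/-- The Laplacian Δu = ∂²u/∂x² + ∂²u/∂y² of a real-valued function on ℂ ≅ ℝ². -/
def lapl (u : ℂ → ℝ) (z : ℂ) : ℝ :=
  fderiv ℝ (fun w => fderiv ℝ u w 1) z 1
    + fderiv ℝ (fun w => fderiv ℝ u w Complex.I) z Complex.I

/-- |∇u|² = (∂u/∂x)² + (∂u/∂y)². -/
def gradSq (u : ℂ → ℝ) (z : ℂ) : ℝ :=
  (fderiv ℝ u z 1) ^ 2 + (fderiv ℝ u z Complex.I) ^ 2

/-- The Wirtinger derivative ∂ = (1/2)(∂/∂x - i ∂/∂y). -/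
def wirt (g : ℂ → ℂ) (z : ℂ) : ℂ :=
  (1 / 2 : ℂ) * (fderiv ℝ g z 1 - Complex.I * fderiv ℝ g z Complex.I)

/-- The auxiliary function u = log((|f₁|²+|f₂|²)/|W(f₁,f₂)|) = -log (f₁/f₂)^#. -/
def uAux (f₁ f₂ : ℂ → ℂ) (z : ℂ) : ℝ :=
  Real.log ((‖f₁ z‖ ^ 2 + ‖f₂ z‖ ^ 2) / ‖Wr f₁ f₂ z‖)

/-- The conformal automorphism φ_a(z) = (a-z)/(1-conj(a) z). -/
def moebius (a z : ℂ) : ℂ := (a - z) / (1 - (starRingEnd ℂ) a * z)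

/-- A single Blaschke factor. -/
def blaschkeFactor (a z : ℂ) : ℂ :=
  if a = 0 then z else ((‖a‖ : ℂ) / a) * ((a - z) / (1 - (starRingEnd ℂ) a * z))

/-- The Blaschke product with zeros `zs`. -/
def blaschkeProd (zs : ℕ → ℂ) (z : ℂ) : ℂ := ∏' n, blaschkeFactor (zs n) z

/-- `f` is bounded on the unit disc. -/
def BoundedOnDisc (f : ℂ → ℂ) : Prop := ∃ M : ℝ, ∀ z ∈ oDisc, ‖f z‖ ≤ M

namespace S5

lemma oDisc_eq : oDisc = Metric.ball (0:ℂ) 1 := by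
  ext z; simp [oDisc, Metric.mem_ball, dist_eq_norm]

lemma isOpen_oDisc : IsOpen oDisc := oDisc_eq ▸ Metric.isOpen_ball

lemma convex_oDisc : Convex ℝ oDisc := oDisc_eq ▸ convex_ball (0:ℂ) 1

/-- h ↦ c * h as an ℝ-CLM. -/
def mulLin (c : ℂ) : ℂ →L[ℝ] ℂ := (c • ContinuousLinearMap.id ℂ ℂ).restrictScalars ℝ

@[simp] lemma mulLin_apply (c h : ℂ) : mulLin c h = c * h := rfl

/-- h ↦ c * conj h as an ℝ-CLM. -/
def conjMulLin (c : ℂ) : ℂ →L[ℝ] ℂ :=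
  (mulLin c).comp (Complex.conjCLE : ℂ ≃L[ℝ] ℂ).toContinuousLinearMap

@[simp] lemma conjMulLin_apply (c h : ℂ) : conjMulLin c h = c * (starRingEnd ℂ) h := rfl

/-- Product rule for x ↦ conj (f x) * g x. -/
lemma hasFDerivAt_conj_mul {f g : ℂ → ℂ} {d e : ℂ} {w : ℂ}
    (hf : HasDerivAt f d w) (hg : HasDerivAt g e w) :
    HasFDerivAt (fun x => (starRingEnd ℂ) (f x) * g x)
      (conjMulLin (g w * (starRingEnd ℂ) d) + mulLin ((starRingEnd ℂ) (f w) * e)) w := by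
  have hc : HasFDerivAt (fun x => (starRingEnd ℂ) (f x))
      ((Complex.conjCLE : ℂ ≃L[ℝ] ℂ).toContinuousLinearMap.comp
        ((ContinuousLinearMap.smulRight (1 : ℂ →L[ℂ] ℂ) d).restrictScalars ℝ)) w :=
    (Complex.conjCLE.toContinuousLinearMap.hasFDerivAt).comp w
      (hf.hasFDerivAt.restrictScalars ℝ)
  have hgF : HasFDerivAt g
      ((ContinuousLinearMap.smulRight (1 : ℂ →L[ℂ] ℂ) e).restrictScalars ℝ) w :=
    hg.hasFDerivAt.restrictScalars ℝ
  have := hc.mul' hgF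
  refine this.congr_fderiv ?_
  ext h
  simp [mulLin, conjMulLin, Complex.conjCLE]
  ring

/-- P = conj f₁ * f₁' + conj f₂ * f₂'. -/
def Pf (f₁ f₂ : ℂ → ℂ) (w : ℂ) : ℂ :=
  (starRingEnd ℂ) (f₁ w) * deriv f₁ w + (starRingEnd ℂ) (f₂ w) * deriv f₂ w

/-- V = |f₁|² + |f₂|². -/
def Vr (f₁ f₂ : ℂ → ℂ) (w : ℂ) : ℝ := normSq (f₁ w) + normSq (f₂ w)

/-- The derivative of V. -/
def dV (f₁ f₂ : ℂ → ℂ) (w : ℂ) : ℂ →L[ℝ] ℝ :=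
  Complex.reCLM.comp (conjMulLin ((starRingEnd ℂ) (Pf f₁ f₂ w)) + mulLin (Pf f₁ f₂ w))

@[simp] lemma dV_apply (f₁ f₂ : ℂ → ℂ) (w h : ℂ) :
    dV f₁ f₂ w h = 2 * (Pf f₁ f₂ w * h).re := by
  simp only [dV, ContinuousLinearMap.coe_comp', Function.comp_apply,
    ContinuousLinearMap.add_apply, conjMulLin_apply, mulLin_apply, Complex.reCLM_apply,
    Complex.add_re]
  rw [← map_mul]
  rw [Complex.conj_re]
  ring

lemma hasFDerivAt_Vr {f₁ f₂ : ℂ → ℂ} {w : ℂ}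
    (h1 : HasDerivAt f₁ (deriv f₁ w) w) (h2 : HasDerivAt f₂ (deriv f₂ w) w) :
    HasFDerivAt (Vr f₁ f₂) (dV f₁ f₂ w) w := by
  have hc := (hasFDerivAt_conj_mul h1 h1).add (hasFDerivAt_conj_mul h2 h2)
  have h3 := (Complex.reCLM.hasFDerivAt).comp w hc
  have h4 : HasFDerivAt (Vr f₁ f₂) _ w :=
    h3.congr_of_eventuallyEq (Filter.Eventually.of_forall (fun x => by
      simp only [Vr, Complex.normSq_apply, Function.comp_apply, Complex.reCLM_apply, Pi.add_apply,
        Complex.add_re, Complex.mul_re, Complex.conj_re, Complex.conj_im]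
      ring))
  refine h4.congr_fderiv ?_
  ext h
  simp [dV, Pf]
  ring

/-- h ↦ (e * h).re as an ℝ-CLM. -/
def reE (e : ℂ) : ℂ →L[ℝ] ℝ := Complex.reCLM.comp (mulLin e)

@[simp] lemma reE_apply (e h : ℂ) : reE e h = (e * h).re := rfl

end S5

set_option maxHeartbeats 3200000 in
/-- identities for u = -log (f₁/f₂)^#. -/
theorem stmt5 (A f₁ f₂ : ℂ → ℂ) (hA : DifferentiableOn ℂ A oDisc)
    (hf₁ : IsSolution A f₁) (hf₂ : IsSolution A f₂) (hli : LinIndep f₁ f₂) :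
    (∀ z ∈ oDisc, lapl (uAux f₁ f₂) z = 4 * Real.exp (-2 * uAux f₁ f₂ z)) ∧
    (∀ z ∈ oDisc,
      lapl (uAux f₁ f₂) z + gradSq (uAux f₁ f₂) z
        = Real.exp (-(uAux f₁ f₂ z)) * lapl (fun w => Real.exp (uAux f₁ f₂ w)) z) ∧
    (∀ z ∈ oDisc,
      A z = - wirt (wirt (fun w => ((uAux f₁ f₂ w : ℝ) : ℂ))) z
              - (wirt (fun w => ((uAux f₁ f₂ w : ℝ) : ℂ)) z) ^ 2) := by
  classical
  obtain ⟨hd1, hode1⟩ := hf₁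
  obtain ⟨hd2, hode2⟩ := hf₂
  have hO := S5.isOpen_oDisc
  have hA1 : AnalyticOnNhd ℂ f₁ oDisc := hd1.analyticOnNhd hO
  have hA2 : AnalyticOnNhd ℂ f₂ oDisc := hd2.analyticOnNhd hO
  have hD1 : ∀ w ∈ oDisc, HasDerivAt f₁ (deriv f₁ w) w := fun w hw =>
    (hd1.differentiableAt (hO.mem_nhds hw)).hasDerivAt
  have hD2 : ∀ w ∈ oDisc, HasDerivAt f₂ (deriv f₂ w) w := fun w hw =>
    (hd2.differentiableAt (hO.mem_nhds hw)).hasDerivAt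
  have hDD1 : ∀ w ∈ oDisc, HasDerivAt (deriv f₁) (deriv (deriv f₁) w) w := fun w hw =>
    ((hA1.deriv w hw).differentiableAt).hasDerivAt
  have hDD2 : ∀ w ∈ oDisc, HasDerivAt (deriv f₂) (deriv (deriv f₂) w) w := fun w hw =>
    ((hA2.deriv w hw).differentiableAt).hasDerivAt
  have hodes1 : ∀ w ∈ oDisc, deriv (deriv f₁) w = -(A w * f₁ w) := fun w hw =>
    eq_neg_of_add_eq_zero_left (hode1 w hw)
  have hodes2 : ∀ w ∈ oDisc, deriv (deriv f₂) w = -(A w * f₂ w) := fun w hw =>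
    eq_neg_of_add_eq_zero_left (hode2 w hw)
  have h0 : (0:ℂ) ∈ oDisc := by simp [oDisc]
  have hWd : ∀ w ∈ oDisc, HasDerivAt (Wr f₁ f₂) 0 w := by
    intro w hw
    have h := ((hD1 w hw).mul (hDD2 w hw)).sub ((hDD1 w hw).mul (hD2 w hw))
    have hval : (deriv f₁ w * deriv f₂ w + f₁ w * deriv (deriv f₂) w)
        - (deriv (deriv f₁) w * f₂ w + deriv f₁ w * deriv f₂ w) = 0 := by
      rw [hodes1 w hw, hodes2 w hw]; ring
    rw [hval] at h
    exact h
  have hWc : ∀ w ∈ oDisc, Wr f₁ f₂ w = Wr f₁ f₂ 0 := by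
    intro w hw
    exact S5.convex_oDisc.is_const_of_fderivWithin_eq_zero (𝕜 := ℂ)
      (fun x hx => ((hWd x hx).differentiableAt).differentiableWithinAt)
      (fun x hx => by
        rw [fderivWithin_of_isOpen hO hx, (hWd x hx).hasFDerivAt.fderiv]
        ext h; simp) hw h0
  set c : ℂ := Wr f₁ f₂ 0 with hcdef
  have hcne : c ≠ 0 := by
    intro hc0
    have hWall : ∀ w ∈ oDisc, Wr f₁ f₂ w = 0 := fun w hw => (hWc w hw).trans hc0
    by_cases hzero : ∀ w ∈ oDisc, f₂ w = 0
    · exact one_ne_zero ((hli 0 1 (fun z hz => by simp [hzero z hz])).2)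
    · push_neg at hzero
      obtain ⟨w₀, hw₀, hf₂w₀⟩ := hzero
      have hcont : ContinuousAt f₂ w₀ := (hd2.differentiableAt (hO.mem_nhds hw₀)).continuousAt
      have hev : ∀ᶠ w in nhds w₀, f₂ w ≠ 0 ∧ w ∈ oDisc :=
        (hcont.eventually_ne hf₂w₀).and (hO.eventually_mem hw₀)
      obtain ⟨r, hr, hball⟩ := Metric.eventually_nhds_iff.1 hev
      have hconst : ∀ w ∈ Metric.ball w₀ r, f₁ w / f₂ w = f₁ w₀ / f₂ w₀ := by
        intro w hw
        refine (convex_ball w₀ r).is_const_of_fderivWithin_eq_zero (𝕜 := ℂ)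
          (f := fun x => f₁ x / f₂ x) ?_ ?_ hw (Metric.mem_ball_self hr)
        · intro x hx
          obtain ⟨hne, hxd⟩ := hball (Metric.mem_ball.1 hx)
          exact (((hD1 x hxd).div (hD2 x hxd) hne).differentiableAt).differentiableWithinAt
        · intro x hx
          obtain ⟨hne, hxd⟩ := hball (Metric.mem_ball.1 hx)
          rw [fderivWithin_of_isOpen Metric.isOpen_ball hx]
          have hdq : HasDerivAt (fun x => f₁ x / f₂ x)
              ((deriv f₁ x * f₂ x - f₁ x * deriv f₂ x) / f₂ x ^ 2) x :=
            (hD1 x hxd).div (hD2 x hxd) hne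
          have hz0 : (deriv f₁ x * f₂ x - f₁ x * deriv f₂ x) / f₂ x ^ 2 = 0 := by
            have hh := hWall x hxd
            unfold Wr at hh
            rw [div_eq_zero_iff]; left; linear_combination -hh
          rw [hz0] at hdq
          rw [hdq.hasFDerivAt.fderiv]
          ext h; simp
      have hg0 : (fun w => f₁ w - (f₁ w₀ / f₂ w₀) * f₂ w) =ᶠ[nhds w₀] 0 := by
        filter_upwards [Metric.ball_mem_nhds w₀ hr] with w hw
        obtain ⟨hne, hwd⟩ := hball (Metric.mem_ball.1 hw)
        have hcw := hconst w hw
        simp only [Pi.zero_apply]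
        rw [← hcw, div_mul_cancel₀ _ hne, sub_self]
      have hganal : AnalyticOnNhd ℂ (fun w => f₁ w - (f₁ w₀ / f₂ w₀) * f₂ w) oDisc :=
        (hd1.sub ((differentiableOn_const _).mul hd2)).analyticOnNhd hO
      have hEq : Set.EqOn (fun w => f₁ w - (f₁ w₀ / f₂ w₀) * f₂ w) 0 oDisc :=
        hganal.eqOn_zero_of_preconnected_of_eventuallyEq_zero
          (S5.convex_oDisc.isPreconnected) hw₀ hg0
      refine one_ne_zero ((hli 1 (-(f₁ w₀ / f₂ w₀)) (fun z hz => ?_)).1)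
      have hEz := hEq hz
      simp only [Pi.zero_apply] at hEz
      linear_combination hEz
  have hVpos : ∀ w ∈ oDisc, 0 < S5.Vr f₁ f₂ w := by
    intro w hw
    by_contra hnot
    push_neg at hnot
    have hn1 := normSq_nonneg (f₁ w)
    have hn2 := normSq_nonneg (f₂ w)
    have h1 : f₁ w = 0 := by
      refine normSq_eq_zero.1 ?_
      unfold S5.Vr at hnot; linarith
    have h2 : f₂ w = 0 := by
      refine normSq_eq_zero.1 ?_
      unfold S5.Vr at hnot; linarith
    exact hcne (by rw [← hWc w hw]; simp [Wr, h1, h2])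
  have hcn : ‖c‖ ≠ 0 := norm_ne_zero_iff.2 hcne
  have hcpos : (0:ℝ) < ‖c‖ := norm_pos_iff.2 hcne
  have huform : ∀ w ∈ oDisc, uAux f₁ f₂ w = Real.log (S5.Vr f₁ f₂ w) - Real.log ‖c‖ := by
    intro w hw
    unfold uAux
    rw [hWc w hw]
    rw [show ‖f₁ w‖ ^ 2 + ‖f₂ w‖ ^ 2 = S5.Vr f₁ f₂ w from by
      simp [S5.Vr, Complex.sq_norm]]
    rw [Real.log_div (ne_of_gt (hVpos w hw)) hcn]
  have hud : ∀ w ∈ oDisc, HasFDerivAt (uAux f₁ f₂)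
      ((S5.Vr f₁ f₂ w)⁻¹ • S5.dV f₁ f₂ w) w := by
    intro w hw
    have h1 : HasFDerivAt (fun x => Real.log (S5.Vr f₁ f₂ x) - Real.log ‖c‖)
        ((S5.Vr f₁ f₂ w)⁻¹ • S5.dV f₁ f₂ w) w :=
      ((S5.hasFDerivAt_Vr (hD1 w hw) (hD2 w hw)).log (ne_of_gt (hVpos w hw))).sub_const _
    exact h1.congr_of_eventuallyEq
      (Filter.eventuallyEq_of_mem (hO.mem_nhds hw) (fun x hx => huform x hx))
  have hufd : ∀ w ∈ oDisc, ∀ e : ℂ, fderiv ℝ (uAux f₁ f₂) w e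
      = (S5.Vr f₁ f₂ w)⁻¹ * (2 * (S5.Pf f₁ f₂ w * e).re) := by
    intro w hw e
    rw [(hud w hw).fderiv]
    simp
  have hPd : ∀ w ∈ oDisc, HasFDerivAt (S5.Pf f₁ f₂)
      ((S5.conjMulLin (deriv f₁ w * (starRingEnd ℂ) (deriv f₁ w))
          + S5.mulLin ((starRingEnd ℂ) (f₁ w) * deriv (deriv f₁) w))
        + (S5.conjMulLin (deriv f₂ w * (starRingEnd ℂ) (deriv f₂ w))
          + S5.mulLin ((starRingEnd ℂ) (f₂ w) * deriv (deriv f₂) w))) w := by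
    intro w hw
    exact (S5.hasFDerivAt_conj_mul (hD1 w hw) (hDD1 w hw)).add
      (S5.hasFDerivAt_conj_mul (hD2 w hw) (hDD2 w hw))
  have hRe : ∀ z ∈ oDisc, ∀ e : ℂ, HasFDerivAt (fun w => 2 * (S5.Pf f₁ f₂ w * e).re)
      ((((2:ℝ) • S5.reE e).comp
        ((S5.conjMulLin (deriv f₁ z * (starRingEnd ℂ) (deriv f₁ z))
            + S5.mulLin ((starRingEnd ℂ) (f₁ z) * deriv (deriv f₁) z))
          + (S5.conjMulLin (deriv f₂ z * (starRingEnd ℂ) (deriv f₂ z))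
            + S5.mulLin ((starRingEnd ℂ) (f₂ z) * deriv (deriv f₂) z))))) z := by
    intro z hz e
    exact ((((2:ℝ) • S5.reE e).hasFDerivAt).comp z (hPd z hz)).congr_of_eventuallyEq
      (Filter.Eventually.of_forall (fun w => by
        simp only [Function.comp_apply, ContinuousLinearMap.coe_smul', Pi.smul_apply,
          S5.reE_apply, smul_eq_mul]
        rw [mul_comm (S5.Pf f₁ f₂ w) e]))
  have hVinv : ∀ z ∈ oDisc, HasFDerivAt (fun w => (S5.Vr f₁ f₂ w)⁻¹)
      ((-(S5.Vr f₁ f₂ z ^ 2)⁻¹) • S5.dV f₁ f₂ z) z := fun z hz =>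
    (hasDerivAt_inv (ne_of_gt (hVpos z hz))).comp_hasFDerivAt z
      (S5.hasFDerivAt_Vr (hD1 z hz) (hD2 z hz))
  have hinner : ∀ z ∈ oDisc, ∀ e : ℂ,
      (fun w => fderiv ℝ (uAux f₁ f₂) w e)
        =ᶠ[nhds z] (fun w => (S5.Vr f₁ f₂ w)⁻¹ * (2 * (S5.Pf f₁ f₂ w * e).re)) := fun z hz e =>
    Filter.eventuallyEq_of_mem (hO.mem_nhds hz) (fun w hw => hufd w hw e)
  have hlaplval : ∀ z ∈ oDisc, lapl (uAux f₁ f₂) z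
      = 4 * normSq c / (S5.Vr f₁ f₂ z) ^ 2 := by
    intro z hz
    unfold lapl
    rw [(hinner z hz 1).fderiv_eq, (hinner z hz Complex.I).fderiv_eq,
      (HasFDerivAt.fderiv (f := fun w => (S5.Vr f₁ f₂ w)⁻¹ * (2 * (S5.Pf f₁ f₂ w * 1).re))
        ((hVinv z hz).mul (hRe z hz 1))),
      (HasFDerivAt.fderiv (f := fun w => (S5.Vr f₁ f₂ w)⁻¹ * (2 * (S5.Pf f₁ f₂ w * Complex.I).re))
        ((hVinv z hz).mul (hRe z hz Complex.I))),
      ← hWc z hz]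
    have hVne : S5.Vr f₁ f₂ z ≠ 0 := ne_of_gt (hVpos z hz)
    simp only [ContinuousLinearMap.add_apply, ContinuousLinearMap.coe_smul', Pi.smul_apply,
      smul_eq_mul, ContinuousLinearMap.coe_comp', Function.comp_apply, S5.conjMulLin_apply,
      S5.mulLin_apply, S5.dV_apply, S5.reE_apply, Complex.reCLM_apply]
    field_simp
    unfold Wr S5.Vr S5.Pf
    simp only [Complex.normSq_apply, Complex.mul_re, Complex.mul_im, Complex.add_re,
      Complex.add_im, Complex.sub_re, Complex.sub_im, Complex.conj_re, Complex.conj_im,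
      Complex.I_re, Complex.I_im, Complex.one_re, Complex.one_im, mul_one,
      mul_zero, zero_mul, sub_zero, zero_sub, add_zero, zero_add, neg_neg, neg_zero]
    ring
  have hgrad : ∀ z ∈ oDisc, gradSq (uAux f₁ f₂) z
      = 4 * normSq (S5.Pf f₁ f₂ z) / (S5.Vr f₁ f₂ z) ^ 2 := by
    intro z hz
    unfold gradSq
    rw [hufd z hz 1, hufd z hz Complex.I]
    have hVne : S5.Vr f₁ f₂ z ≠ 0 := ne_of_gt (hVpos z hz)
    field_simp
    simp only [Complex.normSq_apply, Complex.mul_re, Complex.mul_im,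
      Complex.I_re, Complex.I_im, Complex.one_re, Complex.one_im, mul_one,
      mul_zero, zero_mul, sub_zero, zero_sub, add_zero, zero_add]
    ring
  have hlag : ∀ z ∈ oDisc, normSq c + normSq (S5.Pf f₁ f₂ z)
      = S5.Vr f₁ f₂ z * (normSq (deriv f₁ z) + normSq (deriv f₂ z)) := by
    intro z hz
    rw [← hWc z hz]
    unfold Wr S5.Vr S5.Pf
    simp only [Complex.normSq_apply, Complex.mul_re, Complex.mul_im, Complex.add_re,
      Complex.add_im, Complex.sub_re, Complex.sub_im, Complex.conj_re, Complex.conj_im]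
    ring
  have hexpu : ∀ x ∈ oDisc, Real.exp (uAux f₁ f₂ x) = S5.Vr f₁ f₂ x * ‖c‖⁻¹ := by
    intro x hx
    rw [huform x hx, Real.exp_sub, Real.exp_log (hVpos x hx), Real.exp_log hcpos,
      div_eq_mul_inv]
  refine ⟨?_, ?_, ?_⟩
  · intro z hz
    rw [hlaplval z hz, huform z hz]
    rw [show (-2:ℝ) * (Real.log (S5.Vr f₁ f₂ z) - Real.log ‖c‖)
        = Real.log ((‖c‖ / S5.Vr f₁ f₂ z) ^ 2) from by
      rw [Real.log_pow, Real.log_div hcn (ne_of_gt (hVpos z hz))]; push_cast; ring]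
    rw [Real.exp_log (pow_pos (div_pos hcpos (hVpos z hz)) 2)]
    have hcsq : ‖c‖ ^ 2 = normSq c := by rw [Complex.sq_norm]
    rw [div_pow, hcsq]
    ring
  · intro z hz
    have hexpfd : ∀ w ∈ oDisc, ∀ e : ℂ,
        fderiv ℝ (fun x => Real.exp (uAux f₁ f₂ x)) w e
          = ‖c‖⁻¹ * (2 * (S5.Pf f₁ f₂ w * e).re) := by
      intro w hw e
      have hE : HasFDerivAt (fun x => Real.exp (uAux f₁ f₂ x)) (‖c‖⁻¹ • S5.dV f₁ f₂ w) w :=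
        ((S5.hasFDerivAt_Vr (hD1 w hw) (hD2 w hw)).mul_const ‖c‖⁻¹).congr_of_eventuallyEq
          (Filter.eventuallyEq_of_mem (hO.mem_nhds hw) (fun x hx => hexpu x hx))
      rw [hE.fderiv]; simp
    have hinner2 : ∀ e : ℂ, (fun w => fderiv ℝ (fun x => Real.exp (uAux f₁ f₂ x)) w e)
        =ᶠ[nhds z] (fun w => ‖c‖⁻¹ * (2 * (S5.Pf f₁ f₂ w * e).re)) := fun e =>
      Filter.eventuallyEq_of_mem (hO.mem_nhds hz) (fun w hw => hexpfd w hw e)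
    have hlaplexp : lapl (fun w => Real.exp (uAux f₁ f₂ w)) z
        = ‖c‖⁻¹ * (4 * (normSq (deriv f₁ z) + normSq (deriv f₂ z))) := by
      unfold lapl
      rw [(hinner2 1).fderiv_eq, (hinner2 Complex.I).fderiv_eq,
        ((hRe z hz 1).const_mul ‖c‖⁻¹).fderiv, ((hRe z hz Complex.I).const_mul ‖c‖⁻¹).fderiv]
      simp only [ContinuousLinearMap.add_apply, ContinuousLinearMap.coe_smul', Pi.smul_apply,
        smul_eq_mul, ContinuousLinearMap.coe_comp', Function.comp_apply, S5.conjMulLin_apply,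
        S5.mulLin_apply, S5.dV_apply, S5.reE_apply, Complex.reCLM_apply, map_one,
        Complex.conj_I]
      simp only [Complex.neg_re, Complex.neg_im, Complex.normSq_apply, Complex.mul_re, Complex.mul_im, Complex.add_re,
        Complex.add_im, Complex.conj_re, Complex.conj_im,
        Complex.I_re, Complex.I_im, Complex.one_re, Complex.one_im, mul_one,
        mul_zero, zero_mul, sub_zero, zero_sub, add_zero, zero_add, neg_neg, neg_zero]
      ring
    rw [hlaplval z hz, hgrad z hz, hlaplexp, Real.exp_neg, hexpu z hz]
    have hVne : S5.Vr f₁ f₂ z ≠ 0 := ne_of_gt (hVpos z hz)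
    have h2 : (S5.Vr f₁ f₂ z * ‖c‖⁻¹)⁻¹
        * (‖c‖⁻¹ * (4 * (normSq (deriv f₁ z) + normSq (deriv f₂ z))))
        = 4 * (normSq (deriv f₁ z) + normSq (deriv f₂ z)) / S5.Vr f₁ f₂ z := by
      rw [mul_inv, inv_inv]
      have habs : ‖c‖ ≠ 0 := hcn
      field_simp [habs, hVne]
    rw [h2, ← add_div, div_eq_div_iff (pow_ne_zero 2 hVne) hVne]
    linear_combination (4 * S5.Vr f₁ f₂ z) * hlag z hz
  · intro z hz
    have wirt_def : ∀ (g : ℂ → ℂ) (w : ℂ), wirt g w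
        = (1/2 : ℂ) * (fderiv ℝ g w 1 - Complex.I * fderiv ℝ g w Complex.I) :=
      fun _ _ => rfl
    have hwirtU : ∀ w ∈ oDisc, wirt (fun x => ((uAux f₁ f₂ x : ℝ) : ℂ)) w
        = (((S5.Vr f₁ f₂ w)⁻¹ : ℝ) : ℂ) * S5.Pf f₁ f₂ w := by
      intro w hw
      have hcast : HasFDerivAt (fun x => ((uAux f₁ f₂ x : ℝ) : ℂ))
          (Complex.ofRealCLM.comp ((S5.Vr f₁ f₂ w)⁻¹ • S5.dV f₁ f₂ w)) w :=
        (Complex.ofRealCLM.hasFDerivAt).comp w (hud w hw)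
      rw [wirt_def, hcast.fderiv]
      simp only [ContinuousLinearMap.coe_comp', Function.comp_apply,
        ContinuousLinearMap.coe_smul', Pi.smul_apply, smul_eq_mul, S5.dV_apply,
        Complex.ofRealCLM_apply, mul_one]
      rw [show (1/2 : ℂ) = ((2⁻¹ : ℝ) : ℂ) from by norm_num]
      rw [Complex.ext_iff]
      constructor <;>
      · simp only [Complex.ofReal_mul, Complex.mul_re, Complex.mul_im, Complex.sub_re,
          Complex.sub_im, Complex.ofReal_re, Complex.ofReal_im, Complex.I_re, Complex.I_im,
          mul_zero, zero_mul, sub_zero, zero_sub, add_zero, zero_add, neg_zero, neg_neg]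
        ring
    have hVinvC : HasFDerivAt (fun w => (((S5.Vr f₁ f₂ w)⁻¹ : ℝ) : ℂ))
        (Complex.ofRealCLM.comp ((-(S5.Vr f₁ f₂ z ^ 2)⁻¹) • S5.dV f₁ f₂ z)) z :=
      (Complex.ofRealCLM.hasFDerivAt).comp z (hVinv z hz)
    have hG : HasFDerivAt (fun w => (((S5.Vr f₁ f₂ w)⁻¹ : ℝ) : ℂ) * S5.Pf f₁ f₂ w)
        ((((S5.Vr f₁ f₂ z)⁻¹ : ℝ) : ℂ) •
            (S5.conjMulLin (deriv f₁ z * (starRingEnd ℂ) (deriv f₁ z))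
                + S5.mulLin ((starRingEnd ℂ) (f₁ z) * deriv (deriv f₁) z)
              + (S5.conjMulLin (deriv f₂ z * (starRingEnd ℂ) (deriv f₂ z))
                + S5.mulLin ((starRingEnd ℂ) (f₂ z) * deriv (deriv f₂) z)))
          + (Complex.ofRealCLM.comp
              ((-(S5.Vr f₁ f₂ z ^ 2)⁻¹) • S5.dV f₁ f₂ z)).smulRight (S5.Pf f₁ f₂ z)) z :=
      hVinvC.mul' (hPd z hz)
    have houter : wirt (fun x => ((uAux f₁ f₂ x : ℝ) : ℂ))
        =ᶠ[nhds z] (fun w => (((S5.Vr f₁ f₂ w)⁻¹ : ℝ) : ℂ) * S5.Pf f₁ f₂ w) :=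
      Filter.eventuallyEq_of_mem (hO.mem_nhds hz) (fun w hw => hwirtU w hw)
    rw [wirt_def (wirt fun x => ((uAux f₁ f₂ x : ℝ) : ℂ)) z, houter.fderiv_eq, hG.fderiv,
      hwirtU z hz, hodes1 z hz, hodes2 z hz]
    have hVne : S5.Vr f₁ f₂ z ≠ 0 := ne_of_gt (hVpos z hz)
    rw [show (1/2 : ℂ) = ((2⁻¹ : ℝ) : ℂ) from by norm_num]
    simp only [ContinuousLinearMap.add_apply, ContinuousLinearMap.coe_smul', Pi.smul_apply,
      smul_eq_mul, ContinuousLinearMap.coe_comp', Function.comp_apply, S5.conjMulLin_apply,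
      S5.mulLin_apply, S5.dV_apply, S5.reE_apply, Complex.reCLM_apply,
      ContinuousLinearMap.smulRight_apply, Complex.ofRealCLM_apply, map_one, Complex.conj_I,
      mul_one, Complex.real_smul]
    unfold S5.Pf
    have hVeq : S5.Vr f₁ f₂ z
        = (f₁ z).re ^ 2 + (f₁ z).im ^ 2 + (f₂ z).re ^ 2 + (f₂ z).im ^ 2 := by
      unfold S5.Vr; simp only [Complex.normSq_apply]; ring
    rw [Complex.ext_iff]
    constructor <;>
    · simp only [pow_two, Complex.ofReal_re, Complex.ofReal_im, Complex.mul_re,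
        Complex.mul_im, Complex.add_re, Complex.add_im, Complex.sub_re, Complex.sub_im,
        Complex.neg_re, Complex.neg_im, Complex.conj_re, Complex.conj_im, Complex.I_re,
        Complex.I_im, Complex.one_re, Complex.one_im, mul_zero, zero_mul, sub_zero,
        zero_sub, add_zero, zero_add, neg_zero, neg_neg, mul_one]
      field_simp
      rw [hVeq]
      ring

end
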